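/- Let (H,R) be a quasitriangular bialgebra with half-balance h. Then Δ(h)⁻¹·(h⊗h) = R₂₁⁻¹ is a trivializable Drinfeld twist, the twisted bialgebra satisfies H_R = H^cop with R_R = R₂₁, and Ad(h) is an isomorphism of quasitriangular bialgebras (H,R) → (H^cop, R₂₁). Moreover (Ad(h), 1⊗1) is a twist pair and k=h is an (Ad(h),1⊗1)-twisted universal k-matrix, i.e. Δ(h) = (1⊗h)·(Ad(h)⊗id)(R)·(h⊗1). -/

import Mathlib

noncomputable section
open TensorProduct

variable (F : Type*) [CommRing F] (H : Type*) [Ring H] [Bialgebra F H]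

/-- The flip map on `H ⊗ H`. -/
def τ₂ : H ⊗[F] H ≃ₐ[F] H ⊗[F] H := Algebra.TensorProduct.comm F H H

/-- Embedding of `H ⊗ H` into the first two factors of `(H ⊗ H) ⊗ H`. -/
def ι₁₂ : H ⊗[F] H →ₐ[F] (H ⊗[F] H) ⊗[F] H := Algebra.TensorProduct.includeLeft

/-- Embedding of `H ⊗ H` into the last two factors of `(H ⊗ H) ⊗ H`. -/
def ι₂₃ : H ⊗[F] H →ₐ[F] (H ⊗[F] H) ⊗[F] H :=
  Algebra.TensorProduct.map Algebra.TensorProduct.includeRight (AlgHom.id F H)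

/-- Embedding of `H ⊗ H` into the outer factors of `(H ⊗ H) ⊗ H`. -/
def ι₁₃ : H ⊗[F] H →ₐ[F] (H ⊗[F] H) ⊗[F] H :=
  Algebra.TensorProduct.map Algebra.TensorProduct.includeLeft (AlgHom.id F H)

/-- The image in `(H⊗H)ˣ` of a unit under the flip map. -/
def uflip (R : (H ⊗[F] H)ˣ) : (H ⊗[F] H)ˣ :=
  ⟨τ₂ F H ↑R, τ₂ F H ↑R⁻¹,
    by rw [← map_mul, Units.mul_inv, map_one],
    by rw [← map_mul, Units.inv_mul, map_one]⟩

/-- Conjugation by a unit, as an algebra automorphism. -/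
def Ad {A : Type*} [Ring A] [Algebra F A] (u : Aˣ) : A ≃ₐ[F] A where
  toFun x := ↑u * x * ↑u⁻¹
  invFun x := ↑u⁻¹ * x * ↑u
  left_inv x := by simp [mul_assoc]
  right_inv x := by simp [mul_assoc]
  map_mul' x y := by simp [mul_assoc]
  map_add' x y := by (try dsimp only); rw [mul_add, add_mul]
  commutes' r := by (try dsimp only); rw [← Algebra.commutes, mul_assoc, Units.mul_inv, mul_one]

/-- The unit `(g ⊗ g)` of `H ⊗ H` attached to a unit `g` of `H`. -/
def uTmul (g : Hˣ) : (H ⊗[F] H)ˣ :=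
  ⟨(↑g : H) ⊗ₜ[F] (↑g : H), (↑g⁻¹ : H) ⊗ₜ[F] (↑g⁻¹ : H),
    by rw [Algebra.TensorProduct.tmul_mul_tmul, Units.mul_inv, ← Algebra.TensorProduct.one_def],
    by rw [Algebra.TensorProduct.tmul_mul_tmul, Units.inv_mul, ← Algebra.TensorProduct.one_def]⟩

/-- The comultiplication of the bialgebra `H`. -/
def Δ : H →ₐ[F] H ⊗[F] H := Bialgebra.comulAlgHom F H

/-- The counit of the bialgebra `H`. -/
def ε : H →ₐ[F] F := Bialgebra.counitAlgHom F H

/-- The opposite comultiplication `Δ^op = flip ∘ Δ`. -/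
def Δop : H →ₐ[F] H ⊗[F] H := (τ₂ F H).toAlgHom.comp (Δ F H)

/-- `(Δ ⊗ id)` as a map `H ⊗ H → (H ⊗ H) ⊗ H`. -/
def Δ₁ : H ⊗[F] H →ₐ[F] (H ⊗[F] H) ⊗[F] H :=
  Algebra.TensorProduct.map (Δ F H) (AlgHom.id F H)

/-- `(id ⊗ Δ)`, reassociated into `(H ⊗ H) ⊗ H`. -/
def Δ₂ : H ⊗[F] H →ₐ[F] (H ⊗[F] H) ⊗[F] H :=
  ((Algebra.TensorProduct.assoc (R := F) (S := F) (T := F) (A := H) (C := H) (D := H)).symm.toAlgHom).comp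
    (Algebra.TensorProduct.map (AlgHom.id F H) (Δ F H))

/-- Quasitriangularity of an invertible `R ∈ H ⊗ H` with respect to a coproduct `Δ'`:
`R Δ'(x) = Δ'^op(x) R`, `(Δ'⊗id)(R) = R₁₃R₂₃` and `(id⊗Δ')(R) = R₁₃R₁₂`. -/
def IsQuasiTri (Δ' : H →ₐ[F] H ⊗[F] H) (R : (H ⊗[F] H)ˣ) : Prop :=
  (∀ x : H, (↑R : H ⊗[F] H) * Δ' x = τ₂ F H (Δ' x) * ↑R) ∧
  (Algebra.TensorProduct.map Δ' (AlgHom.id F H)) (↑R : H ⊗[F] H)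
      = ι₁₃ F H ↑R * ι₂₃ F H ↑R ∧
  ((Algebra.TensorProduct.assoc (R := F) (S := F) (T := F) (A := H) (C := H) (D := H)).symm
      ((Algebra.TensorProduct.map (AlgHom.id F H) Δ') (↑R : H ⊗[F] H)))
      = ι₁₃ F H ↑R * ι₁₂ F H ↑R

/-- The unit of `H ⊗ H` obtained by applying `Δ` to a unit of `H`. -/
def uComul (g : Hˣ) : (H ⊗[F] H)ˣ :=
  ⟨Δ F H ↑g, Δ F H ↑g⁻¹,
    by rw [← map_mul, Units.mul_inv, map_one],
    by rw [← map_mul, Units.inv_mul, map_one]⟩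

/-- A Drinfeld twist: an invertible `J ∈ H ⊗ H` with `(ε⊗id)(J) = 1 = (id⊗ε)(J)`
satisfying the cocycle identity `(J⊗1)(Δ⊗id)(J) = (1⊗J)(id⊗Δ)(J)`. -/
def IsTwist (J : (H ⊗[F] H)ˣ) : Prop :=
  (Algebra.TensorProduct.lid F H)
      ((Algebra.TensorProduct.map (ε F H) (AlgHom.id F H)) ↑J) = 1 ∧
  (Algebra.TensorProduct.rid F F H)
      ((Algebra.TensorProduct.map (AlgHom.id F H) (ε F H)) ↑J) = 1 ∧
  ι₁₂ F H ↑J * Δ₁ F H ↑J = ι₂₃ F H ↑J * Δ₂ F H ↑J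

/-- A twist pair `(ψ, J)`: `Δ^{op,ψ} = Ad(J) ∘ Δ` and `(ψ⊗ψ)(R₂₁) = J₂₁ R J⁻¹`. -/
def TwistPair (R : (H ⊗[F] H)ˣ) (ψ : H ≃ₐ[F] H) (J : (H ⊗[F] H)ˣ) : Prop :=
  (∀ x : H, (Algebra.TensorProduct.map ψ.toAlgHom ψ.toAlgHom)
      (τ₂ F H (Δ F H (ψ.symm x))) = ↑J * Δ F H x * ↑J⁻¹) ∧
  ((Algebra.TensorProduct.map ψ.toAlgHom ψ.toAlgHom) (τ₂ F H ↑R)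
      = ↑(uflip F H J) * ↑R * ↑J⁻¹)

/-- The flip map is an involution. -/
lemma ττ (z : H ⊗[F] H) : τ₂ F H (τ₂ F H z) = z := by
  induction z using TensorProduct.induction_on with
  | zero => simp
  | tmul a b => rfl
  | add x y hx hy => rw [map_add, map_add, hx, hy]

/-- A central element `c` of `H` gives a central element `c ⊗ c` of `H ⊗ H`. -/
lemma tmul_central (c : H) (hcen : ∀ x : H, c * x = x * c) (z : H ⊗[F] H) :
    (c ⊗ₜ[F] c) * z = z * (c ⊗ₜ[F] c) := by
  induction z using TensorProduct.induction_on with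
  | zero => simp
  | tmul a b =>
      rw [Algebra.TensorProduct.tmul_mul_tmul, Algebra.TensorProduct.tmul_mul_tmul, hcen, hcen]
  | add x y hx hy => rw [mul_add, add_mul, hx, hy]

/-- `Ad(g) ⊗ Ad(g)` is conjugation by `g ⊗ g`. -/
lemma map_conj (g : Hˣ) (z : H ⊗[F] H) :
    (Algebra.TensorProduct.map (Ad F g).toAlgHom (Ad F g).toAlgHom) z
      = ↑(uTmul F H g) * z * ↑(uTmul F H g)⁻¹ := by
  induction z using TensorProduct.induction_on with
  | zero => simp
  | tmul a b =>
      show ((↑g * a * ↑g⁻¹ : H) ⊗ₜ[F] (↑g * b * ↑g⁻¹ : H))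
        = ((↑g : H) ⊗ₜ[F] (↑g : H)) * a ⊗ₜ[F] b * ((↑g⁻¹ : H) ⊗ₜ[F] (↑g⁻¹ : H))
      rw [Algebra.TensorProduct.tmul_mul_tmul, Algebra.TensorProduct.tmul_mul_tmul]
  | add x y hx hy => rw [map_add, mul_add, add_mul, hx, hy]

/-- `Ad(g) ⊗ id` is conjugation by `g ⊗ 1`. -/
lemma map_conj_left (g : Hˣ) (z : H ⊗[F] H) :
    (Algebra.TensorProduct.map (Ad F g).toAlgHom (AlgHom.id F H)) z
      = ((↑g : H) ⊗ₜ[F] (1 : H)) * z * ((↑g⁻¹ : H) ⊗ₜ[F] (1 : H)) := by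
  induction z using TensorProduct.induction_on with
  | zero => simp
  | tmul a b =>
      show ((↑g * a * ↑g⁻¹ : H) ⊗ₜ[F] b)
        = ((↑g : H) ⊗ₜ[F] (1 : H)) * a ⊗ₜ[F] b * ((↑g⁻¹ : H) ⊗ₜ[F] (1 : H))
      rw [Algebra.TensorProduct.tmul_mul_tmul, Algebra.TensorProduct.tmul_mul_tmul,
        one_mul, mul_one]
  | add x y hx hy => rw [map_add, mul_add, add_mul, hx, hy]

/-- for a half-balance `h`, the twist `(h⊗h)·Δ(h)⁻¹` equals
`R₂₁⁻¹` (so `R` is trivializable), `H_R = H^cop` with `R_R = R₂₁`, `Ad(h)` is an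
isomorphism of quasitriangular bialgebras `(H,R) → (H^cop,R₂₁)`, `(Ad(h), 1⊗1)`
is a twist pair, and `k = h` is an `(Ad(h),1⊗1)`-twisted universal k-matrix:
`Δ(h) = (1⊗h)·(Ad(h)⊗id)(R)·(h⊗1)`. -/
theorem half_balance_almost_cylindrical (R : (H ⊗[F] H)ˣ) (h : Hˣ)
    (hR : IsQuasiTri F H (Δ F H) R)
    (hc : ∀ x : H, (↑h * ↑h : H) * x = x * (↑h * ↑h))
    (hcounit : ε F H ↑h = 1)
    (hcoprod : Δ F H ↑h = ((↑h : H) ⊗ₜ[F] (↑h : H)) * ↑R) :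
    (((↑h : H) ⊗ₜ[F] (↑h : H)) * ↑(uComul F H h)⁻¹ = ↑(uflip F H R)⁻¹) ∧
    (∀ x : H, ↑R * Δ F H x * ↑R⁻¹ = Δop F H x) ∧
    (↑(uflip F H R) * ↑R * ↑R⁻¹ = (↑(uflip F H R) : H ⊗[F] H)) ∧
    (∀ x : H, Δop F H (↑h * x * ↑h⁻¹)
        = (Algebra.TensorProduct.map (Ad F h).toAlgHom (Ad F h).toAlgHom)
            (Δ F H x)) ∧
    ((Algebra.TensorProduct.map (Ad F h).toAlgHom (Ad F h).toAlgHom) ↑R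
        = (↑(uflip F H R) : H ⊗[F] H)) ∧
    TwistPair F H R (Ad F h) 1 ∧
    (Δ F H ↑h = ((1 : H) ⊗ₜ[F] (↑h : H))
        * (Algebra.TensorProduct.map (Ad F h).toAlgHom (AlgHom.id F H)) ↑R
        * ((↑h : H) ⊗ₜ[F] (1 : H))) := by
  obtain ⟨h1, -, -⟩ := hR
  set u : (H ⊗[F] H)ˣ := uTmul F H h with hu
  set S : (H ⊗[F] H)ˣ := uflip F H R with hSdef
  have hu_val : (↑u : H ⊗[F] H) = (↑h : H) ⊗ₜ[F] (↑h : H) := rfl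
  have hu_inv : (↑u⁻¹ : H ⊗[F] H) = (↑h⁻¹ : H) ⊗ₜ[F] (↑h⁻¹ : H) := rfl
  have hS_val : (↑S : H ⊗[F] H) = τ₂ F H ↑R := rfl
  have hS_inv : (↑S⁻¹ : H ⊗[F] H) = τ₂ F H ↑R⁻¹ := rfl
  have hτu : τ₂ F H ↑u = ↑u := rfl
  have hτuinv : τ₂ F H (↑u⁻¹ : H ⊗[F] H) = ↑u⁻¹ := rfl
  have hΔop : ∀ x : H, Δop F H x = τ₂ F H (Δ F H x) := fun _ => rfl
  -- the key exchange relation `R (h⊗h) = (h⊗h) R₂₁`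
  have hτhh : τ₂ F H ((↑h : H) ⊗ₜ[F] (↑h : H)) = (↑u : H ⊗[F] H) := rfl
  have keyU : R * u = u * S := by
    refine Units.ext ?_
    show (↑R : H ⊗[F] H) * ↑u = ↑u * ↑S
    have h0 := h1 (↑h : H)
    rw [hcoprod, map_mul, hτhh, ← hS_val, ← hu_val] at h0
    have h2 : ((↑R : H ⊗[F] H) * (↑u * ↑R)) * ↑R⁻¹ = (↑u * ↑S * ↑R) * ↑R⁻¹ := by rw [h0]
    simpa [mul_assoc] using h2
  -- centrality of `u²`
  have hcentU : ∀ z : (H ⊗[F] H)ˣ, u * u * z = z * (u * u) := by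
    intro z
    refine Units.ext ?_
    show (↑u * ↑u : H ⊗[F] H) * ↑z = ↑z * (↑u * ↑u)
    rw [hu_val, Algebra.TensorProduct.tmul_mul_tmul]
    exact tmul_central F H _ hc _
  have hconj1 : u⁻¹ * R * u = S := by
    rw [mul_assoc, keyU, ← mul_assoc, inv_mul_cancel, one_mul]
  have hconj2 : u * R * u⁻¹ = S := by
    have e : u * R * u⁻¹ = u * u * (u⁻¹ * R * u) * (u⁻¹ * u⁻¹) := by group
    rw [e, hconj1, hcentU S]
    group
  -- `Δ(h)` as a unit
  have hcu : uComul F H h = u * R := by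
    refine Units.ext ?_
    show Δ F H ↑h = (↑u : H ⊗[F] H) * ↑R
    rw [hcoprod, hu_val]
  -- elementwise quasitriangularity and its flip
  have e1 : ∀ x : H, (↑R : H ⊗[F] H) * Δ F H x = Δop F H x * ↑R := fun x => h1 x
  have e2 : ∀ x : H, (↑S : H ⊗[F] H) * Δop F H x = Δ F H x * ↑S := by
    intro x
    have := congrArg (τ₂ F H) (h1 x)
    rw [map_mul, map_mul, ττ] at this
    rw [hS_val, hΔop]
    exact this
  have eΔoph : Δop F H ↑h = ↑u * ↑S := by
    rw [hΔop, hcoprod, map_mul, hτhh, ← hS_val]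
  have eΔophinv : Δop F H (↑h⁻¹ : H) = (↑S⁻¹ : H ⊗[F] H) * ↑u⁻¹ := by
    have hd : Δ F H (↑h⁻¹ : H) = (↑(uComul F H h)⁻¹ : H ⊗[F] H) := rfl
    rw [hΔop, hd, hcu, mul_inv_rev, Units.val_mul, map_mul, hτuinv, hS_inv]
  have eΔophinv' : Δop F H (↑h⁻¹ : H) = (↑u⁻¹ : H ⊗[F] H) * ↑R⁻¹ := by
    rw [eΔophinv]
    have : S⁻¹ * u⁻¹ = u⁻¹ * R⁻¹ := by
      rw [← mul_inv_rev, ← mul_inv_rev, keyU]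
    exact congrArg Units.val this
  have eΔoph' : Δop F H ↑h = (↑R : H ⊗[F] H) * ↑u := by
    rw [eΔoph]
    exact (congrArg Units.val keyU).symm
  refine ⟨?_, ?_, ?_, ?_, ?_, ⟨?_, ?_⟩, ?_⟩
  · -- goal 1 : (h⊗h) Δ(h)⁻¹ = R₂₁⁻¹
    have g1 : u * (uComul F H h)⁻¹ = S⁻¹ := by
      rw [hcu, mul_inv_rev, ← hconj2]
      group
    exact congrArg Units.val g1
  · -- goal 2 : R Δ(x) R⁻¹ = Δop(x)
    intro x
    rw [e1 x, mul_assoc, Units.mul_inv, mul_one]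
  · -- goal 3
    rw [mul_assoc, Units.mul_inv, mul_one]
  · -- goal 4 : Ad(h) intertwines Δ and Δop
    intro x
    rw [map_conj, ← hu]
    rw [map_mul, map_mul, eΔoph, eΔophinv, mul_assoc (↑u : H ⊗[F] H) ↑S, e2 x]
    simp only [mul_assoc, Units.mul_inv_cancel_left]
  · -- goal 5 : (Ad(h)⊗Ad(h))(R) = R₂₁
    rw [map_conj]
    exact congrArg Units.val hconj2
  · -- goal 6a : twist pair, coproduct condition
    intro x
    have hsymm : (Ad F h).symm x = ↑h⁻¹ * x * ↑h := rfl
    have hstep : τ₂ F H (Δ F H ((Ad F h).symm x)) = Δop F H (↑h⁻¹ * x * ↑h) := by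
      rw [hsymm, hΔop]
    rw [hstep]
    have inner : Δop F H (↑h⁻¹ * x * ↑h) = (↑u⁻¹ : H ⊗[F] H) * Δ F H x * ↑u := by
      rw [map_mul, map_mul, eΔophinv', eΔoph']
      simp only [mul_assoc]
      rw [← mul_assoc (Δop F H x) (↑R : H ⊗[F] H) ↑u, ← e1 x]
      simp only [mul_assoc, Units.inv_mul_cancel_left]
    rw [inner, map_conj, ← hu]
    simp [mul_assoc]
  · -- goal 6b : twist pair, R-matrix condition
    have huS : u * S * u⁻¹ = R := by rw [← keyU]; group
    have hflip1 : (↑(uflip F H (1 : (H ⊗[F] H)ˣ)) : H ⊗[F] H) = 1 := by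
      show τ₂ F H (1 : H ⊗[F] H) = 1
      exact map_one _
    rw [← hS_val, map_conj, hflip1]
    simpa using congrArg Units.val huS
  · -- goal 7 : the k-matrix identity
    rw [map_conj_left, hcoprod]
    simp only [mul_assoc]
    rw [Algebra.TensorProduct.tmul_mul_tmul, Units.inv_mul, one_mul,
      ← Algebra.TensorProduct.one_def, mul_one]
    simp only [← mul_assoc]
    rw [Algebra.TensorProduct.tmul_mul_tmul, one_mul, mul_one]

end
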